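/- arXiv:1101.3004 — 5 statements merged into one kernel-verified Lean document; each statement's English description precedes it below -/
import Mathlib

section
/- For every integer n ≥ 1, the number of c-strings of length 2n+1 is at least 2^n; that is, Π_{2n+1} ≥ 2^n. -/
/-- A c-string of length `k` is a sequence of nonnegative integers `(c₁, …, c_k)`
with `c₁ = 1`, `c_{i+1} ≤ 2·c_i` for all `1 ≤ i ≤ k−1`, and `c₁ + ⋯ + c_k = k`. -/
def IsCString (k : ℕ) (l : List ℕ) : Prop :=
  l.length = k ∧ l.head? = some 1 ∧ l.Chain' (fun a b => b ≤ 2 * a) ∧ l.sum = k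

/-- `Π_k`, the number of c-strings of length `k`. -/
noncomputable def numCStrings (k : ℕ) : ℕ :=
  Nat.card {l : List ℕ // IsCString k l}

/-- blocks -/
def fblocks : List Bool → List ℕ
  | [] => []
  | true :: bs => 1 :: 1 :: fblocks bs
  | false :: bs => 2 :: fblocks bs

lemma fblocks_mem : ∀ (b : List Bool) (x : ℕ), x ∈ fblocks b → 1 ≤ x ∧ x ≤ 2
  | [], x, h => by simp [fblocks] at h
  | true :: bs, x, h => by
      simp only [fblocks, List.mem_cons] at h
      rcases h with h | h | h
      · omega
      · omega
      · exact fblocks_mem bs x h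
  | false :: bs, x, h => by
      simp only [fblocks, List.mem_cons] at h
      rcases h with h | h
      · omega
      · exact fblocks_mem bs x h

lemma fblocks_sum : ∀ b : List Bool, (fblocks b).sum = 2 * b.length
  | [] => by simp [fblocks]
  | true :: bs => by simp [fblocks, fblocks_sum bs]; ring
  | false :: bs => by simp [fblocks, fblocks_sum bs]; ring

lemma fblocks_length_le : ∀ b : List Bool, (fblocks b).length ≤ 2 * b.length
  | [] => by simp [fblocks]
  | true :: bs => by
      have := fblocks_length_le bs; simp [fblocks]; omega
  | false :: bs => by
      have := fblocks_length_le bs; simp [fblocks]; omega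

lemma fblocks_inj : ∀ b₁ b₂ : List Bool, fblocks b₁ = fblocks b₂ → b₁ = b₂
  | [], [], _ => rfl
  | [], true :: bs, h => by simp [fblocks] at h
  | [], false :: bs, h => by simp [fblocks] at h
  | true :: bs, [], h => by simp [fblocks] at h
  | false :: bs, [], h => by simp [fblocks] at h
  | true :: bs₁, true :: bs₂, h => by
      simp only [fblocks, List.cons.injEq] at h
      rw [fblocks_inj bs₁ bs₂ h.2.2]
  | true :: bs₁, false :: bs₂, h => by simp [fblocks] at h
  | false :: bs₁, true :: bs₂, h => by simp [fblocks] at h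
  | false :: bs₁, false :: bs₂, h => by
      simp only [fblocks, List.cons.injEq] at h
      rw [fblocks_inj bs₁ bs₂ h.2]

lemma takeWhile_append_zeros : ∀ (l : List ℕ) (z : ℕ), (∀ x ∈ l, x ≠ 0) →
    (l ++ List.replicate z 0).takeWhile (fun x => x != 0) = l
  | [], z, _ => by
      induction z with
      | zero => simp
      | succ m ih => simp [List.replicate_succ, ih]
  | a :: t, z, h => by
      have ha : a ≠ 0 := h a (by simp)
      have ht : ∀ x ∈ t, x ≠ 0 := fun x hx => h x (by simp [hx])
      simp only [List.cons_append, List.takeWhile_cons]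
      simp [ha, takeWhile_append_zeros t z ht]

lemma chain'_zeros : ∀ z : ℕ, (List.replicate z (0:ℕ)).Chain' (fun a b => b ≤ 2 * a)
  | 0 => by simp [List.Chain']
  | 1 => by simp [List.Chain']
  | (m+2) => by
      rw [List.replicate_succ, List.replicate_succ, List.Chain', List.isChain_cons_cons]
      refine ⟨by simp, ?_⟩
      rw [← List.replicate_succ]
      exact chain'_zeros (m+1)

lemma chain'_of_small : ∀ l : List ℕ, (∀ x ∈ l, 1 ≤ x ∧ x ≤ 2) →
    l.Chain' (fun a b => b ≤ 2 * a)
  | [], _ => by simp [List.Chain']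
  | [a], _ => by simp [List.Chain']
  | a :: b :: t, h => by
      rw [List.Chain', List.isChain_cons_cons]
      refine ⟨?_, chain'_of_small (b :: t) (fun x hx => h x (by simp at hx ⊢; tauto))⟩
      have h1 := h a (by simp)
      have h2 := h b (by simp)
      omega

/-- the c-string attached to a boolean list -/
def gstr (b : List Bool) : List ℕ :=
  1 :: (fblocks b ++ List.replicate (2 * b.length - (fblocks b).length) 0)

lemma gstr_isCString (n : ℕ) (b : List Bool) (hb : b.length = n) :
    IsCString (2 * n + 1) (gstr b) := by
  have hle := fblocks_length_le b
  refine ⟨?_, rfl, ?_, ?_⟩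
  · simp [gstr, hb]; omega
  · have h1 : ∀ x ∈ (1 : ℕ) :: fblocks b, 1 ≤ x ∧ x ≤ 2 := by
      intro x hx
      rcases List.mem_cons.1 hx with h | h
      · omega
      · exact fblocks_mem b x h
    have hc1 := chain'_of_small _ h1
    have hc2 := chain'_zeros (2 * b.length - (fblocks b).length)
    show ((1 :: fblocks b) ++ List.replicate _ 0).Chain' _
    rw [List.Chain', List.isChain_append]
    refine ⟨hc1, hc2, ?_⟩
    intro x _ y hy
    have : y = 0 := by
      have := List.mem_of_mem_head? hy
      simpa using List.eq_of_mem_replicate this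
    omega
  · simp [gstr, fblocks_sum b, hb]; ring

lemma gstr_inj : Function.Injective gstr := by
  intro b₁ b₂ h
  simp only [gstr, List.cons.injEq, true_and] at h
  have h1 : ∀ x ∈ fblocks b₁, x ≠ 0 := fun x hx => by
    have := fblocks_mem b₁ x hx; omega
  have h2 : ∀ x ∈ fblocks b₂, x ≠ 0 := fun x hx => by
    have := fblocks_mem b₂ x hx; omega
  have := congrArg (List.takeWhile (fun x => x != 0)) h
  rw [takeWhile_append_zeros _ _ h1, takeWhile_append_zeros _ _ h2] at this
  exact fblocks_inj _ _ this

lemma finite_cstrings (k : ℕ) : Finite {l : List ℕ // IsCString k l} := by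
  apply Finite.of_injective
    (fun p : {l : List ℕ // IsCString k l} => fun i : Fin k =>
      (⟨p.1.getD i 0, by
        rcases p.2 with ⟨hlen, _, _, hsum⟩
        have hi : (i : ℕ) < p.1.length := by rw [hlen]; exact i.2
        rw [List.getD_eq_getElem p.1 0 hi]
        have : p.1[(i:ℕ)] ≤ p.1.sum :=
          List.single_le_sum (fun x _ => Nat.zero_le x) _ (List.getElem_mem hi)
        omega⟩ : Fin (k + 1)))
  intro p q h
  ext1
  rcases p.2 with ⟨hlp, _, _, _⟩
  rcases q.2 with ⟨hlq, _, _, _⟩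
  apply List.ext_getElem (by rw [hlp, hlq])
  intro i h1 h2
  have := congrFun h ⟨i, by omega⟩
  simp only [Fin.mk.injEq] at this
  rwa [List.getD_eq_getElem p.1 0 h1, List.getD_eq_getElem q.1 0 h2] at this

/-- For every integer `n ≥ 1`, the number of c-strings of length `2n+1` is at
least `2^n`; that is, `Π_{2n+1} ≥ 2^n`. -/
theorem two_pow_le_numCStrings (n : ℕ) (hn : 1 ≤ n) :
    2 ^ n ≤ numCStrings (2 * n + 1) := by
  haveI := finite_cstrings (2 * n + 1)
  have hG : Function.Injective (fun v : Fin n → Bool =>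
      (⟨gstr (List.ofFn v), gstr_isCString n (List.ofFn v) (by simp)⟩ :
        {l : List ℕ // IsCString (2 * n + 1) l})) := by
    intro v w h
    have h' : gstr (List.ofFn v) = gstr (List.ofFn w) := congrArg Subtype.val h
    exact List.ofFn_injective (gstr_inj h')
  have := Nat.card_le_card_of_injective _ hG
  simpa [numCStrings, Nat.card_eq_fintype_card] using this
end

section
/- For every integer m ≥ 1, the number of partitions of 1 into 2m powers of 1/2 is at least 2^{m−1}. -/
/-- Tree construction: list of blocks, starting depth. -/
def blockM : List Bool → ℕ → Multiset ℕ
  | [], p => {p, p}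
  | false :: bs, p => p ::ₘ (p+1) ::ₘ blockM bs (p+2)
  | true :: bs, p => (p+1) ::ₘ (p+1) ::ₘ blockM bs (p+1)

lemma blockM_card (bs : List Bool) (p : ℕ) :
    Multiset.card (blockM bs p) = 2 * bs.length + 2 := by
  induction bs generalizing p with
  | nil => simp [blockM]
  | cons b bs ih =>
    cases b <;> simp [blockM, ih] <;> ring

lemma blockM_sum (bs : List Bool) (p : ℕ) :
    ((blockM bs p).map fun e => ((1:ℚ)/2) ^ e).sum = 2 * ((1:ℚ)/2) ^ p := by
  induction bs generalizing p with
  | nil => simp [blockM]; ring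
  | cons b bs ih =>
    cases b <;>
      simp only [blockM, Multiset.map_cons, Multiset.sum_cons, ih, pow_succ, pow_add] <;> ring

lemma blockM_lb (bs : List Bool) (p : ℕ) : ∀ e ∈ blockM bs p, p ≤ e := by
  induction bs generalizing p with
  | nil =>
    intro e he
    simp only [blockM, Multiset.insert_eq_cons, Multiset.mem_cons,
      Multiset.mem_singleton] at he
    rcases he with h | h <;> omega
  | cons b bs ih =>
    intro e he
    cases b <;> simp only [blockM, Multiset.mem_cons] at he <;>
      rcases he with h | h | h <;> first
        | omega
        | (have := ih _ _ h; omega)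

lemma blockM_count_nil (p : ℕ) : (blockM [] p).count p = 2 := by simp [blockM]

lemma blockM_count_false (bs : List Bool) (p : ℕ) :
    (blockM (false :: bs) p).count p = 1 := by
  have h0 : (blockM bs (p+2)).count p = 0 := by
    rw [Multiset.count_eq_zero]; intro hc; have := blockM_lb _ _ _ hc; omega
  simp [blockM, Multiset.count_cons, h0]

lemma blockM_count_true (bs : List Bool) (p : ℕ) :
    (blockM (true :: bs) p).count p = 0 := by
  have h0 : (blockM bs (p+1)).count p = 0 := by
    rw [Multiset.count_eq_zero]; intro hc; have := blockM_lb _ _ _ hc; omega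
  simp [blockM, Multiset.count_cons, h0]

lemma blockM_inj : ∀ (bs cs : List Bool) (p : ℕ), blockM bs p = blockM cs p → bs = cs := by
  intro bs
  induction bs with
  | nil =>
    intro cs p h
    cases cs with
    | nil => rfl
    | cons c cs =>
      have h1 := blockM_count_nil p
      rw [h] at h1
      cases c
      · rw [blockM_count_false] at h1; omega
      · rw [blockM_count_true] at h1; omega
  | cons b bs ih =>
    intro cs p h
    cases cs with
    | nil =>
      have h1 := blockM_count_nil p
      rw [← h] at h1
      cases b
      · rw [blockM_count_false] at h1; omega
      · rw [blockM_count_true] at h1; omega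
    | cons c cs =>
      have hbc : b = c := by
        cases b <;> cases c
        · rfl
        · exfalso
          have h1 := blockM_count_false bs p
          rw [h, blockM_count_true] at h1; omega
        · exfalso
          have h1 := blockM_count_true bs p
          rw [h, blockM_count_false] at h1; omega
        · rfl
      subst hbc
      cases b <;>
      · simp only [blockM, Multiset.cons_inj_right] at h
        rw [ih _ _ h]

/-- Every exponent in a partition of 1 into n parts is < n. -/
lemma partition_lt (n : ℕ) : ∀ s : Multiset ℕ, Multiset.card s = n →
    (s.map fun e => ((1:ℚ)/2) ^ e).sum = 1 → ∀ e ∈ s, e < n := by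
  induction n using Nat.strong_induction_on with
  | _ n IH =>
  intro s hcard hsum e he
  have hn0 : n ≠ 0 := by
    rintro rfl
    rw [Multiset.card_eq_zero] at hcard
    subst hcard; simp at hsum
  set E := s.sup with hE
  have hle : ∀ a ∈ s, a ≤ E := fun a ha => Multiset.le_sup ha
  rcases Nat.eq_zero_or_pos E with hE0 | hEpos
  · -- all elements are 0, so sum = card = n = 1
    have hall : ∀ a ∈ s, a = 0 := fun a ha => by have := hle a ha; omega
    have hrep : s = Multiset.replicate n 0 :=
      Multiset.eq_replicate.mpr ⟨hcard, hall⟩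
    rw [hrep] at hsum
    simp [Multiset.map_replicate] at hsum
    have := hle e he
    omega
  · -- E ≥ 1 : multiplicity of E is even and positive
    set t := s.count E with ht
    set s₂ := s.filter (fun a => ¬ a = E) with hs₂
    have hsplit : Multiset.replicate t E + s₂ = s := by
      rw [hs₂, ht, ← Multiset.filter_eq']
      exact Multiset.filter_add_not _ s
    -- natural number equation
    have hnat : ((s.map fun e => 2 ^ (E - e)).sum : ℕ) = 2 ^ E := by
      have key : ∀ a ∈ s, ((2:ℚ)) ^ (E - a) = 2 ^ E * ((1:ℚ)/2) ^ a := by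
        intro a ha
        have haE := hle a ha
        rw [one_div, inv_pow, ← Nat.sub_add_cancel haE, pow_add]
        field_simp
        rw [Nat.add_sub_cancel]
      have hcast : (((s.map fun e => 2 ^ (E - e)).sum : ℕ) : ℚ) = 2 ^ E := by
        rw [Nat.cast_multiset_sum, Multiset.map_map]
        have : (Nat.cast ∘ fun e => 2 ^ (E - e) : ℕ → ℚ) = fun e => ((2:ℚ)) ^ (E - e) := by
          funext x; simp only [Function.comp_apply]; push_cast; ring
        rw [this, Multiset.map_congr rfl key, Multiset.sum_map_mul_left, hsum, mul_one]
      exact_mod_cast hcast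
    have hteven : 2 ∣ t := by
      have h2 : (s.map fun e => 2 ^ (E - e)).sum
          = t * 1 + (s₂.map fun e => 2 ^ (E - e)).sum := by
        conv_lhs => rw [← hsplit]
        simp [Multiset.map_replicate, Nat.sub_self]
      have hdvd : 2 ∣ (s₂.map fun e => 2 ^ (E - e)).sum := by
        apply Multiset.dvd_sum
        intro x hx
        rw [Multiset.mem_map] at hx
        obtain ⟨a, ha, rfl⟩ := hx
        have ha' : a ∈ s := Multiset.mem_of_mem_filter ha
        have haE : a ≤ E := hle a ha'
        have hane : ¬ a = E := by
          have := Multiset.of_mem_filter ha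
          exact this
        exact ⟨2 ^ (E - a - 1), by rw [← pow_succ']; congr 1; omega⟩
      have hdvd2 : (2:ℕ) ∣ 2 ^ E := dvd_pow_self 2 (by omega)
      rw [h2] at hnat
      omega
    have htpos : t ≠ 0 := by
      intro ht0
      have hEmem : E ∈ s := by
        by_contra hEs
        have hsb : s.sup ≤ E - 1 := by
          apply Multiset.sup_le.mpr
          intro b hb
          have hbE := hle b hb
          have : b ≠ E := fun hbe => hEs (hbe ▸ hb)
          omega
        omega
      rw [ht, Multiset.count_eq_zero] at ht0
      exact ht0 hEmem
    have ht2 : 2 ≤ t := by omega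
    have htn : t ≤ n := by
      rw [ht, ← hcard]; exact Multiset.count_le_card E s
    -- new partition
    set s' := Multiset.replicate (t/2) (E-1) + s₂ with hs'
    have hcard₂ : Multiset.card s₂ = n - t := by
      have := congrArg Multiset.card hsplit
      simp [hcard] at this
      omega
    have hcard' : Multiset.card s' = t/2 + (n - t) := by simp [hs', hcard₂]
    have hsum₂ : (t : ℚ) * ((1:ℚ)/2)^E + (s₂.map fun e => ((1:ℚ)/2) ^ e).sum = 1 := by
      conv_rhs => rw [← hsum]
      conv_rhs => rw [← hsplit]
      simp [Multiset.map_replicate]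
    have hhalf : ((t/2 : ℕ) : ℚ) * ((1:ℚ)/2)^(E-1) = (t : ℚ) * ((1:ℚ)/2)^E := by
      obtain ⟨u, hu⟩ := hteven
      have hEe : E = (E - 1) + 1 := by omega
      rw [hu, Nat.mul_div_cancel_left u (by norm_num)]
      conv_rhs => rw [hEe]
      rw [pow_succ]
      push_cast
      ring
    have hsum' : (s'.map fun e => ((1:ℚ)/2) ^ e).sum = 1 := by
      rw [hs']
      simp only [Multiset.map_add, Multiset.sum_add, Multiset.map_replicate,
        Multiset.sum_replicate, nsmul_eq_mul]
      rw [hhalf]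
      exact hsum₂
    have hn' : t/2 + (n - t) < n := by omega
    have IH' := IH _ hn' s' hcard' hsum'
    have hE1 : E - 1 ∈ s' := by
      rw [hs', Multiset.mem_add]
      left
      exact Multiset.mem_replicate.mpr ⟨by omega, rfl⟩
    have hElt := IH' _ hE1
    have := hle e he
    omega


/-- A partition of `1` into `m` powers of `1/2` is a multiset of `m` nonnegative
integers `(e₁, …, e_m)` such that `(1/2)^{e₁} + ⋯ + (1/2)^{e_m} = 1` in `ℚ`. -/
def IsPartitionOfOne (m : ℕ) (s : Multiset ℕ) : Prop :=
  Multiset.card s = m ∧ (s.map fun e => ((1 : ℚ) / 2) ^ e).sum = 1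

/-- The number of partitions of `1` into `m` powers of `1/2`. -/
noncomputable def numPartitionsOfOne (m : ℕ) : ℕ :=
  Nat.card {s : Multiset ℕ // IsPartitionOfOne m s}

instance partitionFinite (n : ℕ) : Finite {s : Multiset ℕ // IsPartitionOfOne n s} := by
  rcases Nat.eq_zero_or_pos n with rfl | hn
  · have : IsEmpty {s : Multiset ℕ // IsPartitionOfOne 0 s} := by
      constructor
      rintro ⟨s, hc, hs⟩
      rw [Multiset.card_eq_zero] at hc
      subst hc
      simp at hs
    infer_instance
  · let f : {s : Multiset ℕ // IsPartitionOfOne n s} → Sym (Fin n) n :=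
      fun x => ⟨x.1.map fun e => (⟨e % n, Nat.mod_lt _ hn⟩ : Fin n), by simp [x.2.1]⟩
    have hinj : Function.Injective f := ?_
    · exact @Finite.of_injective _ _ (Finite.of_fintype _) f hinj
    intro x y h
    have h' := congrArg (fun z : Sym (Fin n) n => (z : Multiset (Fin n)).map Fin.val) h
    simp only [f, Sym.coe_mk, Multiset.map_map, Function.comp] at h'
    have hx : ∀ (w : {s : Multiset ℕ // IsPartitionOfOne n s}),
        w.1.map (fun e => e % n) = w.1 := by
      intro w
      rw [Multiset.map_congr rfl fun a ha =>
        Nat.mod_eq_of_lt (partition_lt n w.1 w.2.1 w.2.2 a ha)]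
      exact Multiset.map_id _
    apply Subtype.ext
    rw [← hx x, ← hx y]
    exact h'

/-- For every integer `m ≥ 1`, the number of partitions of `1` into `2m` powers
of `1/2` is at least `2^{m−1}`. -/
theorem two_pow_le_numPartitionsOfOne (m : ℕ) (hm : 1 ≤ m) :
    2 ^ (m - 1) ≤ numPartitionsOfOne (2 * m) := by
  have hf : ∀ b : Fin (m-1) → Bool, IsPartitionOfOne (2*m) (blockM (List.ofFn b) 1) := by
    intro b
    constructor
    · rw [blockM_card, List.length_ofFn]; omega
    · rw [blockM_sum]; norm_num
  have hinj : Function.Injective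
      (fun b : Fin (m-1) → Bool =>
        (⟨blockM (List.ofFn b) 1, hf b⟩ : {s : Multiset ℕ // IsPartitionOfOne (2*m) s})) := by
    intro b c h
    rw [Subtype.mk.injEq] at h
    have := blockM_inj _ _ _ h
    exact List.ofFn_inj.mp this
  have hcard := Nat.card_le_card_of_injective _ hinj
  have : Nat.card (Fin (m-1) → Bool) = 2 ^ (m-1) := by
    simp [Nat.card_eq_fintype_card]
  rw [this] at hcard
  exact hcard
end

section
/- The sequence Π_k is not polynomially bounded: for every real constant C > 0 and every natural number d, there exists an integer k ≥ 1 with Π_k > C·k^d. -/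
/-- The c-string associated to a subset `s` of `Fin (2t)`:
`1`, then a word of `1`s and `2`s (with `2` at positions in `s`), then zeros. -/
def cList (t : ℕ) (s : Finset (Fin (2 * t))) : List ℕ :=
  1 :: (List.ofFn (fun i => if i ∈ s then 2 else 1) ++ List.replicate t 0)

lemma cList_isCString (t : ℕ) (s : Finset (Fin (2 * t))) (hs : s.card = t) :
    IsCString (3 * t + 1) (cList t s) := by
  refine ⟨?_, rfl, ?_, ?_⟩
  · simp [cList]; omega
  · rw [cList, List.Chain', List.isChain_cons]
    refine ⟨?_, ?_⟩
    · intro y hy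
      have hy' := List.mem_of_mem_head? hy
      rcases List.mem_append.mp hy' with h | h
      · simp only [List.mem_ofFn] at h
        obtain ⟨i, hi⟩ := h
        have hi' : (if i ∈ s then 2 else 1) = y := hi
        split_ifs at hi' <;> omega
      · have := List.eq_of_mem_replicate h
        omega
    · rw [List.isChain_append]
      refine ⟨?_, List.isChain_replicate_of_rel _ le_rfl, ?_⟩
      · apply List.Pairwise.isChain
        apply List.pairwise_iff_forall_sublist.mpr
        intro a b hab
        have ha : a ∈ List.ofFn (fun i : Fin (2*t) => if i ∈ s then 2 else 1) :=
          hab.subset (by simp)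
        have hb : b ∈ List.ofFn (fun i : Fin (2*t) => if i ∈ s then 2 else 1) :=
          hab.subset (by simp)
        simp only [List.mem_ofFn] at ha hb
        obtain ⟨i, hi⟩ := ha; obtain ⟨j, hj⟩ := hb
        have hi' : (if i ∈ s then 2 else 1) = a := hi
        have hj' : (if j ∈ s then 2 else 1) = b := hj
        split_ifs at hi' hj' <;> omega
      · intro x hx y hy
        have : y = 0 := by
          rcases Nat.eq_zero_or_pos t with ht | ht
          · simp [ht] at hy
          · rw [List.head?_replicate] at hy
            simp only [if_neg ht.ne'] at hy
            exact (Option.some_inj.mp hy).symm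
        omega
  · have hsum : (List.ofFn (fun i : Fin (2*t) => if i ∈ s then 2 else 1)).sum = 3 * t := by
      rw [List.sum_ofFn]
      have : ∀ i : Fin (2*t), (if i ∈ s then 2 else 1) = (if i ∈ s then 1 else 0) + 1 := by
        intro i; split_ifs <;> rfl
      rw [Finset.sum_congr rfl (fun i _ => this i), Finset.sum_add_distrib,
        Finset.sum_boole]
      simp [Finset.filter_mem_eq_inter, hs]
      omega
    simp [cList, hsum]
    omega

lemma cList_injective (t : ℕ) : Function.Injective (cList t) := by
  intro s₁ s₂ h
  have hf : (fun i : Fin (2*t) => if i ∈ s₁ then (2:ℕ) else 1) =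
      fun i => if i ∈ s₂ then 2 else 1 := by
    have h' := h
    simp only [cList, List.cons.injEq, List.append_cancel_right_eq, List.ofFn_inj,
      true_and] at h'
    exact h'
  ext i
  have := congrFun hf i
  constructor <;> intro hi <;> by_contra hni <;> simp [hi, hni] at this

lemma centralBinom_le_numCStrings (t : ℕ) :
    Nat.centralBinom t ≤ numCStrings (3 * t + 1) := by
  have : Finite {l : List ℕ // IsCString (3 * t + 1) l} := finite_cstrings _
  have key : Nat.card {s : Finset (Fin (2 * t)) // s.card = t} ≤
      numCStrings (3 * t + 1) := by
    apply Nat.card_le_card_of_injective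
      (f := fun s => ⟨cList t s.1, cList_isCString t s.1 s.2⟩)
    intro a b hab
    exact Subtype.ext (cList_injective t (congrArg Subtype.val hab))
  rw [Nat.card_eq_fintype_card, Fintype.card_finset_len, Fintype.card_fin] at key
  exact key

/-- The sequence `Π_k` is not polynomially bounded: for every real `C > 0` and
every natural number `d`, there exists `k ≥ 1` with `Π_k > C·k^d`. -/
theorem numCStrings_not_polynomially_bounded (C : ℝ) (hC : 0 < C) (d : ℕ) :
    ∃ k : ℕ, 1 ≤ k ∧ C * (k : ℝ) ^ d < (numCStrings k : ℝ) := by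
  -- choose t large
  have htend := tendsto_pow_const_div_const_pow_of_one_lt (d + 1)
    (show (1:ℝ) < 4 by norm_num)
  have hε : (0:ℝ) < 1 / (C * 4 ^ (d + 1)) := by positivity
  have hev := (htend.eventually (gt_mem_nhds hε)).and (Filter.eventually_ge_atTop 4)
  obtain ⟨t, ht, ht4⟩ := hev.exists
  refine ⟨3 * t + 1, by omega, ?_⟩
  have ht0 : (0:ℝ) < t := by exact_mod_cast (by omega : 0 < t)
  have h4pow : (0:ℝ) < 4 ^ t := by positivity
  set B : ℕ := Nat.centralBinom t with hB
  have hBpos : 0 < B := Nat.centralBinom_pos t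
  have hbin : (4:ℝ) ^ t < t * B := by
    have := Nat.four_pow_lt_mul_centralBinom t ht4
    exact_mod_cast this
  -- from ht : t^(d+1)/4^t < 1/(C*4^(d+1))
  have h1 : (t:ℝ) ^ (d + 1) < 1 / (C * 4 ^ (d + 1)) * 4 ^ t := by
    rw [← div_lt_iff₀ h4pow]; exact ht
  have h2 : (t:ℝ) ^ (d + 1) < 1 / (C * 4 ^ (d + 1)) * (t * B) := by
    refine h1.trans_le ?_
    exact mul_le_mul_of_nonneg_left hbin.le hε.le
  have h3 : (t:ℝ) ^ d < 1 / (C * 4 ^ (d + 1)) * B := by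
    have h2' : (t:ℝ) ^ d * t < 1 / (C * 4 ^ (d + 1)) * B * t := by
      calc (t:ℝ) ^ d * t = (t:ℝ) ^ (d + 1) := by ring
        _ < 1 / (C * 4 ^ (d + 1)) * (t * B) := h2
        _ = 1 / (C * 4 ^ (d + 1)) * B * t := by ring
    exact (mul_lt_mul_iff_of_pos_right ht0).mp h2'
  have ht1 : (1:ℝ) ≤ t := by exact_mod_cast (by omega : 1 ≤ t)
  have hk : ((3 * t + 1 : ℕ) : ℝ) ≤ 4 * t := by push_cast; linarith
  have hkpow : ((3 * t + 1 : ℕ) : ℝ) ^ d ≤ (4 * t) ^ d :=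
    pow_le_pow_left₀ (by positivity) hk d
  have hmain : C * ((3 * t + 1 : ℕ) : ℝ) ^ d < B := by
    calc C * ((3 * t + 1 : ℕ) : ℝ) ^ d ≤ C * (4 * t) ^ d :=
          mul_le_mul_of_nonneg_left hkpow hC.le
      _ = C * 4 ^ d * (t:ℝ) ^ d := by ring
      _ < C * 4 ^ d * (1 / (C * 4 ^ (d + 1)) * B) := by
          apply mul_lt_mul_of_pos_left h3 (by positivity)
      _ = B / 4 := by
          field_simp
          ring
      _ < B := by
          have : (0:ℝ) < B := by exact_mod_cast hBpos
          linarith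
  refine hmain.trans_le ?_
  exact_mod_cast centralBinom_le_numCStrings t
end

section
/- Let n ≥ 1. For each subset S of {1,…,n}, let c^S be the sequence of length 2n+1 obtained from the sequence (1, 2, 2, …, 2, 0, 0, …, 0) (one 1, then n copies of 2, then n copies of 0) by replacing, for each j ∈ S, the j-th copy of 2 by two consecutive entries equal to 1 and deleting one trailing 0 for each such replacement. Then every c^S is a c-string of length 2n+1, and the map S ↦ c^S is injective; in particular there are at least 2^n distinct c-strings of length 2n+1. -/
/-- For `S ⊆ {1, …, n}`, the sequence obtained from `(1, 2, 2, …, 2, 0, 0, …, 0)`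
(one `1`, then `n` copies of `2`, then `n` copies of `0`) by replacing, for each
`j ∈ S`, the `j`-th copy of `2` by two consecutive entries equal to `1`, and
deleting one trailing `0` for each such replacement. -/
def cSeq (n : ℕ) (S : Finset ℕ) : List ℕ :=
  1 :: (((List.range n).flatMap fun j => if j + 1 ∈ S then [1, 1] else [2]) ++
    List.replicate (n - S.card) 0)

private lemma zeros_chain : ∀ m : ℕ, List.Chain' (fun a b => b ≤ 2 * a) (List.replicate m 0)
  | 0 => by simp [List.Chain']
  | (m+1) => by
      rw [List.replicate_succ, List.Chain', List.isChain_cons]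
      refine ⟨fun y hy => ?_, zeros_chain m⟩
      cases m with
      | zero => simp at hy
      | succ m => simp [List.replicate_succ] at hy; omega

private lemma chain_aux : ∀ (A : List ℕ), (∀ x ∈ A, x = 1 ∨ x = 2) → ∀ m a, 1 ≤ a →
    List.Chain' (fun x b => b ≤ 2 * x) (a :: (A ++ List.replicate m 0))
  | [], _, m, a, ha => by
      rw [List.nil_append, List.Chain', List.isChain_cons]
      refine ⟨fun y hy => ?_, zeros_chain m⟩
      cases m with
      | zero => simp at hy
      | succ m => simp [List.replicate_succ] at hy; omega
  | (x :: A), h, m, a, ha => by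
      rw [List.cons_append, List.Chain', List.isChain_cons]
      have hx : x = 1 ∨ x = 2 := h x (by simp)
      refine ⟨fun y hy => ?_, chain_aux A (fun z hz => h z (by simp [hz])) m x (by omega)⟩
      simp at hy
      omega

private lemma g_inj : ∀ bs cs : List Bool,
    (bs.flatMap fun b => if b then [1, 1] else [2]) =
      (cs.flatMap fun b => if b then [1, 1] else [2]) → bs = cs
  | [], [], _ => rfl
  | [], (c :: cs), h => by cases c <;> simp at h
  | (b :: bs), [], h => by cases b <;> simp at h
  | (b :: bs), (c :: cs), h => by
      cases b <;> cases c <;> simp_all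
      exacts [g_inj _ _ h, g_inj _ _ h]

private lemma takeWhile_app_rep (A : List ℕ) (hA : ∀ x ∈ A, x ≠ 0) (p : ℕ) :
    (A ++ List.replicate p 0).takeWhile (fun x => x ≠ 0) = A := by
  induction A with
  | nil => simp [List.takeWhile_replicate]
  | cons x A ih =>
      have hx : x ≠ 0 := hA x (by simp)
      simp only [List.cons_append, List.takeWhile_cons]
      rw [if_pos (by simpa using hx), ih (fun z hz => hA z (by simp [hz]))]

private lemma flat_mem (n : ℕ) (S : Finset ℕ) :
    ∀ x ∈ (List.range n).flatMap fun j => if j + 1 ∈ S then [1, 1] else [2],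
      x = 1 ∨ x = 2 := by
  intro x hx
  simp only [List.mem_flatMap, List.mem_range] at hx
  obtain ⟨j, _, hj⟩ := hx
  split at hj <;> simp_all

private lemma sum_flatMap' (l : List ℕ) (f : ℕ → List ℕ) :
    (l.flatMap f).sum = (l.map fun a => (f a).sum).sum := by
  induction l <;> simp_all

private lemma filter_card (n : ℕ) (S : Finset ℕ) (hS : S ⊆ Finset.Icc 1 n) :
    ((Finset.range n).filter (fun j => j + 1 ∈ S)).card = S.card := by
  apply Finset.card_bij (fun j _ => j + 1)
  · intro j hj; exact (Finset.mem_filter.mp hj).2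
  · intro a _ b _ hab; omega
  · intro b hb
    have hb' := Finset.mem_Icc.mp (hS hb)
    refine ⟨b - 1, Finset.mem_filter.mpr ⟨Finset.mem_range.mpr (by omega), ?_⟩, by omega⟩
    have hbb : b - 1 + 1 = b := by omega
    rw [hbb]; exact hb

private lemma lenA (n : ℕ) (S : Finset ℕ) (hS : S ⊆ Finset.Icc 1 n) :
    ((List.range n).flatMap fun j => if j + 1 ∈ S then [1, 1] else [2]).length
      = n + S.card := by
  have hcard : S.card ≤ n := by
    have := Finset.card_le_card hS
    simpa using this
  have hFc := filter_card n S hS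
  have hFn : ((Finset.range n).filter (fun j => ¬ (j + 1 ∈ S))).card = n - S.card := by
    have h2 := Finset.card_filter_add_card_filter_not
      (s := Finset.range n) (p := fun j => j + 1 ∈ S)
    rw [hFc, Finset.card_range] at h2
    omega
  rw [List.length_flatMap]
  have e0 : (List.length ∘ fun j => if j + 1 ∈ S then ([1, 1] : List ℕ) else [2])
      = fun j => if j + 1 ∈ S then 2 else 1 := by
    funext j; by_cases h : j + 1 ∈ S <;> simp [h]
  rw [show (fun a => (if a + 1 ∈ S then ([1, 1] : List ℕ) else [2]).length) = fun j => if j + 1 ∈ S then 2 else 1 from e0]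
  have e1 : (List.map (fun j => if j + 1 ∈ S then 2 else 1) (List.range n)).sum
      = ∑ j ∈ Finset.range n, (if j + 1 ∈ S then 2 else 1) := rfl
  rw [e1, Finset.sum_ite, Finset.sum_const, Finset.sum_const, smul_eq_mul, smul_eq_mul,
    hFc, hFn]
  omega

private lemma sumA (n : ℕ) (S : Finset ℕ) :
    ((List.range n).flatMap fun j => if j + 1 ∈ S then [1, 1] else [2]).sum = 2 * n := by
  rw [sum_flatMap']
  have e0 : (fun j => ((if j + 1 ∈ S then [1, 1] else [2]) : List ℕ).sum)
      = fun _ => 2 := by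
    funext j; by_cases h : j + 1 ∈ S <;> simp [h]
  rw [e0]
  have e1 : List.map (fun _ => (2 : ℕ)) (List.range n) = List.replicate n 2 := by
    simp [List.map_const']
  rw [e1, List.sum_replicate, smul_eq_mul]
  omega

/-- Every `cSeq n S` (for `S ⊆ {1, …, n}`, `n ≥ 1`) is a c-string of length
`2n+1`, the map `S ↦ cSeq n S` is injective, and in particular there are at
least `2^n` distinct c-strings of length `2n+1`. -/
theorem cSeq_isCString_injective (n : ℕ) (hn : 1 ≤ n) :
    (∀ S : Finset ℕ, S ⊆ Finset.Icc 1 n → IsCString (2 * n + 1) (cSeq n S)) ∧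
    (∀ S T : Finset ℕ, S ⊆ Finset.Icc 1 n → T ⊆ Finset.Icc 1 n →
      cSeq n S = cSeq n T → S = T) ∧
    2 ^ n ≤ numCStrings (2 * n + 1) := by
  have hcs : ∀ S : Finset ℕ, S ⊆ Finset.Icc 1 n → IsCString (2 * n + 1) (cSeq n S) := by
    intro S hS
    have hcard : S.card ≤ n := by
      have := Finset.card_le_card hS
      simpa using this
    refine ⟨?_, rfl, ?_, ?_⟩
    · simp only [cSeq, List.length_cons, List.length_append, List.length_replicate,
        lenA n S hS]
      omega
    · exact chain_aux _ (flat_mem n S) (n - S.card) 1 le_rfl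
    · simp only [cSeq, List.sum_cons, List.sum_append, List.sum_replicate, smul_eq_mul,
        mul_zero, sumA n S]
      omega
  have hinj : ∀ S T : Finset ℕ, S ⊆ Finset.Icc 1 n → T ⊆ Finset.Icc 1 n →
      cSeq n S = cSeq n T → S = T := by
    intro S T hS hT h
    simp only [cSeq, List.cons.injEq, true_and] at h
    have hA := congrArg (List.takeWhile (fun x => x ≠ 0)) h
    rw [takeWhile_app_rep _ (fun x hx => by rcases flat_mem n S x hx with h1 | h1 <;> omega) _,
      takeWhile_app_rep _ (fun x hx => by rcases flat_mem n T x hx with h1 | h1 <;> omega) _] at hA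
    have hg : (((List.range n).map fun j => decide (j + 1 ∈ S)).flatMap
        fun b => if b then [1, 1] else [2]) =
        (((List.range n).map fun j => decide (j + 1 ∈ T)).flatMap
        fun b => if b then [1, 1] else [2]) := by
      rw [List.flatMap_map, List.flatMap_map]
      simpa using hA
    have hmap := g_inj _ _ hg
    rw [List.map_inj_left] at hmap
    ext a
    by_cases h1 : 1 ≤ a ∧ a ≤ n
    · have h2 := hmap (a - 1) (List.mem_range.mpr (by omega))
      rw [show a - 1 + 1 = a by omega, decide_eq_decide] at h2
      exact h2
    · constructor <;> intro ha
      · exact (h1 (Finset.mem_Icc.mp (hS ha))).elim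
      · exact (h1 (Finset.mem_Icc.mp (hT ha))).elim
  refine ⟨hcs, hinj, ?_⟩
  have hfin : {l : List ℕ | IsCString (2 * n + 1) l}.Finite := by
    apply Set.Finite.subset
      ((List.finite_length_eq (Fin (2 * n + 2)) (2 * n + 1)).image (List.map Fin.val))
    intro l hl
    obtain ⟨hlen, -, -, hsum⟩ := hl
    have hle : ∀ x ∈ l, x ≤ 2 * n + 1 := fun x hx =>
      hsum ▸ List.single_le_sum (fun _ _ => Nat.zero_le _) x hx
    refine ⟨l.map (fun x => (⟨min x (2 * n + 1), by omega⟩ : Fin (2 * n + 2))),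
      by simp [hlen], ?_⟩
    rw [List.map_map]
    conv_rhs => rw [← List.map_id l]
    exact List.map_congr_left (fun x hx => by
      simp [Nat.min_eq_left (hle x hx)])
  have hcardeq : numCStrings (2 * n + 1) = hfin.toFinset.card := by
    rw [numCStrings]
    exact Nat.card_eq_card_finite_toFinset hfin
  calc 2 ^ n = ((Finset.Icc 1 n).powerset).card := by
        simp [Finset.card_powerset, Nat.card_Icc]
    _ ≤ hfin.toFinset.card := by
        apply Finset.card_le_card_of_injOn (cSeq n)
        · intro S hSmem
          rw [Finset.mem_coe, Set.Finite.mem_toFinset]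
          exact hcs S (Finset.mem_powerset.mp hSmem)
        · intro S hSmem T hTmem hEq
          exact hinj S T (Finset.mem_powerset.mp hSmem) (Finset.mem_powerset.mp hTmem) hEq
    _ = numCStrings (2 * n + 1) := hcardeq.symm
end

section
/- For every k ≥ 1, the number Π_k of c-strings of length k equals the number of partitions of 1 into k+1 powers of 1/2. -/
namespace CSP

def g : ℕ → List ℕ → Multiset ℕ
  | _, [] => 0
  | e, [c] => Multiset.replicate (2 * c) e
  | e, c :: c' :: t => Multiset.replicate (2 * c - c') e + g (e + 1) (c' :: t)

lemma mem_g_le {x : ℕ} : ∀ {l : List ℕ} {e : ℕ}, x ∈ g e l → e ≤ x := by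
  intro l
  induction l with
  | nil => intro e hx; simp [g] at hx
  | cons c t ih =>
    intro e hx
    cases t with
    | nil =>
      simp only [g] at hx
      have := Multiset.eq_of_mem_replicate hx
      omega
    | cons c' t' =>
      simp only [g, Multiset.mem_add] at hx
      rcases hx with hx | hx
      · have := Multiset.eq_of_mem_replicate hx; omega
      · have := ih hx; omega

lemma count_g_eq_zero {e : ℕ} {l : List ℕ} : Multiset.count e (g (e + 1) l) = 0 := by
  rw [Multiset.count_eq_zero]
  intro h
  have := mem_g_le h
  omega

lemma card_g : ∀ {l : List ℕ}, ∀ (e : ℕ), l ≠ [] → l.Chain' (fun a b => b ≤ 2 * a) →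
    Multiset.card (g e l) = l.sum + l.headI := by
  intro l
  induction l with
  | nil => intro e h; exact absurd rfl h
  | cons c t ih =>
    intro e _ hc
    cases t with
    | nil => simp [g]; omega
    | cons c' t' =>
      have h1 : c' ≤ 2 * c := (List.isChain_cons_cons.mp hc).1
      have h2 := (List.isChain_cons_cons.mp hc).2
      simp only [g, Multiset.card_add, Multiset.card_replicate,
        ih (e + 1) (by simp) h2, List.sum_cons, List.headI]
      omega

lemma sum_g : ∀ {l : List ℕ}, ∀ (e : ℕ), l.Chain' (fun a b => b ≤ 2 * a) →
    ((g e l).map fun x => ((1 : ℚ) / 2) ^ x).sum = 2 * l.headI * ((1 : ℚ) / 2) ^ e := by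
  intro l
  induction l with
  | nil => intro e _; simp [g]
  | cons c t ih =>
    intro e hc
    cases t with
    | nil =>
      simp [g, Multiset.map_replicate, Multiset.sum_replicate]
    | cons c' t' =>
      have h1 : c' ≤ 2 * c := (List.isChain_cons_cons.mp hc).1
      have h2 := (List.isChain_cons_cons.mp hc).2
      simp only [g, Multiset.map_add, Multiset.sum_add, Multiset.map_replicate,
        Multiset.sum_replicate, ih (e + 1) h2, List.headI]
      have hcast : ((2 * c - c' : ℕ) : ℚ) = 2 * c - c' := by
        push_cast [Nat.cast_sub h1]; ring
      rw [nsmul_eq_mul, hcast, pow_succ]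
      ring

lemma g_inj : ∀ (l₁ l₂ : List ℕ) (e : ℕ), l₁.Chain' (fun a b => b ≤ 2 * a) →
    l₂.Chain' (fun a b => b ≤ 2 * a) → l₁.length = l₂.length → l₁.headI = l₂.headI →
    g e l₁ = g e l₂ → l₁ = l₂ := by
  intro l₁
  induction l₁ with
  | nil =>
    intro l₂ e _ _ hlen _ _
    cases l₂ with
    | nil => rfl
    | cons b t => simp at hlen
  | cons a t₁ ih =>
    intro l₂ e hc₁ hc₂ hlen hhead hg
    cases l₂ with
    | nil => simp at hlen
    | cons b t₂ =>
      have hab : a = b := hhead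
      subst hab
      cases t₁ with
      | nil =>
        cases t₂ with
        | nil => rfl
        | cons b' t₂' => simp at hlen
      | cons a' t₁' =>
        cases t₂ with
        | nil => simp at hlen
        | cons b' t₂' =>
          have ha' : a' ≤ 2 * a := (List.isChain_cons_cons.mp hc₁).1
          have hb' : b' ≤ 2 * a := (List.isChain_cons_cons.mp hc₂).1
          have hcount := congrArg (Multiset.count e) hg
          simp only [g, Multiset.count_add, Multiset.count_replicate_self,
            count_g_eq_zero] at hcount
          have heq : a' = b' := by omega
          subst heq
          have hg' : g (e + 1) (a' :: t₁') = g (e + 1) (a' :: t₂') := by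
            have := hg
            simp only [g] at this
            exact add_left_cancel this
          have := ih (a' :: t₂') (e + 1) (List.isChain_cons_cons.mp hc₁).2
            (List.isChain_cons_cons.mp hc₂).2 (by simpa using hlen) rfl hg'
          rw [this]

lemma g_surj : ∀ (n e h : ℕ) (s : Multiset ℕ),
    (∀ x ∈ s, e ≤ x ∧ x < e + n) →
    ((s.map fun x => ((1 : ℚ) / 2) ^ x).sum = 2 * h * ((1 : ℚ) / 2) ^ e) →
    ∃ l : List ℕ, l.length = n ∧ l.headI = h ∧ l.Chain' (fun a b => b ≤ 2 * a) ∧ g e l = s := by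
  intro n
  induction n with
  | zero =>
    intro e h s hbd hsum
    have hs : s = 0 := by
      rw [Multiset.eq_zero_iff_forall_notMem]
      intro x hx
      have := hbd x hx; omega
    subst hs
    simp at hsum
    have hpow : ((1 : ℚ) / 2) ^ e ≠ 0 := by positivity
    have hh : h = 0 := hsum
    exact ⟨[], rfl, hh.symm, List.isChain_nil, rfl⟩
  | succ n ih =>
    intro e h s hbd hsum
    set d := Multiset.count e s with hd
    have hsplit : s = Multiset.replicate d e + s.filter (· ≠ e) := by
      conv_lhs => rw [← Multiset.filter_add_not (· = e) s]
      congr 1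
      rw [Multiset.filter_eq']
    set s' := s.filter (· ≠ e) with hs'
    have hsum_split : ((s.map fun x => ((1 : ℚ) / 2) ^ x).sum) =
        d * ((1 : ℚ) / 2) ^ e + ((s'.map fun x => ((1 : ℚ) / 2) ^ x).sum) := by
      conv_lhs => rw [hsplit]
      simp [Multiset.map_replicate, Multiset.sum_replicate]
    have hnonneg : 0 ≤ (s'.map fun x => ((1 : ℚ) / 2) ^ x).sum := by
      apply Multiset.sum_nonneg
      intro q hq
      simp only [Multiset.mem_map] at hq
      obtain ⟨x, _, rfl⟩ := hq
      positivity
    have hpowpos : (0 : ℚ) < ((1 : ℚ) / 2) ^ e := by positivity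
    have hdle : d ≤ 2 * h := by
      by_contra hlt
      push_neg at hlt
      have : (2 * h : ℚ) * ((1 : ℚ) / 2) ^ e < d * ((1 : ℚ) / 2) ^ e := by
        apply mul_lt_mul_of_pos_right _ hpowpos
        exact_mod_cast hlt
      nlinarith [hsum, hsum_split]
    set h' := 2 * h - d with hh'
    have hsum' : ((s'.map fun x => ((1 : ℚ) / 2) ^ x).sum) = 2 * h' * ((1 : ℚ) / 2) ^ (e + 1) := by
      have hcast : ((h' : ℕ) : ℚ) = 2 * h - d := by
        rw [hh']; push_cast [Nat.cast_sub hdle]; ring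
      have : ((s'.map fun x => ((1 : ℚ) / 2) ^ x).sum) = (2 * h - d) * ((1 : ℚ) / 2) ^ e := by
        rw [hsum_split] at hsum
        linarith [hsum]
      rw [this, pow_succ, hcast]
      ring
    have hbd' : ∀ x ∈ s', e + 1 ≤ x ∧ x < e + 1 + n := by
      intro x hx
      rw [hs', Multiset.mem_filter] at hx
      have := hbd x hx.1
      have hne : x ≠ e := by simpa using hx.2
      omega
    obtain ⟨l', hlen', hhead', hchain', hg'⟩ := ih (e + 1) h' s' hbd' hsum'
    refine ⟨h :: l', by simp [hlen'], rfl, ?_, ?_⟩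
    · cases l' with
      | nil => exact List.isChain_singleton h
      | cons c' t =>
        show List.IsChain _ _
        rw [List.isChain_cons_cons]
        have : c' = h' := hhead'
        exact ⟨by omega, hchain'⟩
    · cases l' with
      | nil =>
        have hn0 : s' = 0 := by rw [← hg']; rfl
        have hh0 : h' = 0 := hhead'.symm
        have hd2 : d = 2 * h := by omega
        simp only [g]
        rw [hsplit, hn0, hd2, add_zero]
      | cons c' t =>
        have hc' : c' = h' := hhead'
        simp only [g]
        rw [hsplit, hg']
        congr 1
        congr 1
        omega

lemma sum_pow_pos {s : Multiset ℕ} (hs : s ≠ 0) :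
    0 < (s.map fun e => ((1 : ℚ) / 2) ^ e).sum := by
  obtain ⟨a, ha⟩ := Multiset.exists_mem_of_ne_zero hs
  obtain ⟨t, rfl⟩ := Multiset.exists_cons_of_mem ha
  simp only [Multiset.map_cons, Multiset.sum_cons]
  have h1 : (0 : ℚ) < ((1 : ℚ) / 2) ^ a := by positivity
  have h2 : 0 ≤ (t.map fun e => ((1 : ℚ) / 2) ^ e).sum := by
    apply Multiset.sum_nonneg
    intro q hq
    simp only [Multiset.mem_map] at hq
    obtain ⟨x, _, rfl⟩ := hq
    positivity
  linarith

lemma part_pos {m : ℕ} {s : Multiset ℕ} (hm : 2 ≤ m) (hcard : Multiset.card s = m)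
    (hsum : (s.map fun e => ((1 : ℚ) / 2) ^ e).sum = 1) : ∀ e ∈ s, 1 ≤ e := by
  intro e he
  by_contra h0
  have he0 : e = 0 := by omega
  subst he0
  obtain ⟨t, rfl⟩ := Multiset.exists_cons_of_mem he
  simp only [Multiset.map_cons, Multiset.sum_cons, pow_zero] at hsum
  have ht0 : t ≠ 0 := by
    intro h
    subst h
    simp at hcard
    omega
  have : 0 < (t.map fun e => ((1 : ℚ) / 2) ^ e).sum := sum_pow_pos ht0
  linarith

lemma sup_mem : ∀ (s : Multiset ℕ), s ≠ 0 → s.sup ∈ s := by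
  intro s
  induction s using Multiset.induction with
  | empty => intro h; exact absurd rfl h
  | cons a t ih =>
    intro _
    rw [Multiset.sup_cons]
    rcases eq_or_ne t 0 with rfl | ht
    · simp
    · rcases le_total a t.sup with h | h
      · rw [sup_eq_right.mpr h]
        exact Multiset.mem_cons_of_mem (ih ht)
      · rw [sup_eq_left.mpr h]
        exact Multiset.mem_cons_self a t

lemma part_bound : ∀ (m : ℕ) (s : Multiset ℕ), Multiset.card s = m →
    (s.map fun e => ((1 : ℚ) / 2) ^ e).sum = 1 → ∀ e ∈ s, e < m := by
  intro m
  induction m using Nat.strong_induction_on with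
  | _ m ih =>
    intro s hcard hsum e he
    have hs0 : s ≠ 0 := by
      intro h; subst h; exact absurd he (Multiset.notMem_zero e)
    have hm1 : 1 ≤ m := by
      rw [← hcard]; exact Multiset.card_pos.mpr hs0
    rcases Nat.lt_or_ge m 2 with hm | hm
    · -- m = 1
      have hm' : m = 1 := by omega
      subst hm'
      obtain ⟨a, rfl⟩ := Multiset.card_eq_one.mp hcard
      simp only [Multiset.map_singleton, Multiset.sum_singleton] at hsum
      have ha : a = 0 := by
        by_contra ha
        have : ((1 : ℚ) / 2) ^ a < 1 := by
          apply pow_lt_one₀ (by norm_num) (by norm_num)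
          omega
        linarith
      simp only [Multiset.mem_singleton] at he
      omega
    · -- m ≥ 2
      have hpos := part_pos hm hcard hsum
      set M := s.sup with hM
      have hMmem : M ∈ s := sup_mem s hs0
      have hMax : ∀ x ∈ s, x ≤ M := fun x hx => Multiset.le_sup hx
      have hM1 : 1 ≤ M := hpos M hMmem
      -- the natural-number identity: ∑ 2^(M-x) = 2^M
      have hnat : (s.map fun x => 2 ^ (M - x)).sum = 2 ^ M := by
        have hq : (((s.map fun x => 2 ^ (M - x)).sum : ℕ) : ℚ)
            = ((2 : ℚ) ^ M) := by
          rw [Nat.cast_multiset_sum, Multiset.map_map]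
          have : ∀ x ∈ s, ((fun x => ((2 ^ (M - x) : ℕ) : ℚ)) x)
              = (2 : ℚ) ^ M * ((1 : ℚ) / 2) ^ x := by
            intro x hx
            have hxM : x ≤ M := hMax x hx
            push_cast
            rw [div_pow, one_pow, mul_one_div, eq_div_iff (by positivity),
              ← pow_add]
            congr 1
            omega
          rw [show (Nat.cast ∘ fun x => ((2:ℕ) ^ (M - x))) = (fun x : ℕ => ((2 ^ (M - x) : ℕ) : ℚ)) from rfl]
          rw [Multiset.map_congr rfl this]
          rw [show (fun x : ℕ => (2:ℚ) ^ M * ((1 : ℚ) / 2) ^ x) = (fun x : ℕ => (2:ℚ) ^ M * ((fun x => ((1:ℚ)/2) ^ x) x)) from rfl]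
          rw [Multiset.sum_map_mul_left, hsum, mul_one]
        exact_mod_cast hq
      -- split off the copies of M
      set t := Multiset.count M s with ht
      set r := s.filter (· ≠ M) with hr
      have hsplit : s = Multiset.replicate t M + r := by
        conv_lhs => rw [← Multiset.filter_add_not (· = M) s]
        congr 1
        rw [Multiset.filter_eq']
      have hrlt : ∀ x ∈ r, x < M := by
        intro x hx
        rw [hr, Multiset.mem_filter] at hx
        have := hMax x hx.1
        have : x ≠ M := by simpa using hx.2
        omega
      have hnat' : t + (r.map fun x => 2 ^ (M - x)).sum = 2 ^ M := by
        rw [hsplit] at hnat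
        simpa [Multiset.map_replicate, Multiset.sum_replicate] using hnat
      have hdvd_r : 2 ∣ (r.map fun x => 2 ^ (M - x)).sum := by
        apply Multiset.dvd_sum
        intro q hq
        simp only [Multiset.mem_map] at hq
        obtain ⟨x, hx, rfl⟩ := hq
        have : x < M := hrlt x hx
        exact dvd_pow_self 2 (by omega)
      have hdvd_M : 2 ∣ 2 ^ M := dvd_pow_self 2 (by omega)
      have ht2 : 2 ≤ t := by
        have ht1 : 1 ≤ t := Multiset.count_pos.mpr hMmem
        obtain ⟨u, hu⟩ := hdvd_r
        obtain ⟨v, hv⟩ := hdvd_M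
        omega
      -- build the smaller partition
      set s' : Multiset ℕ := (M - 1) ::ₘ (Multiset.replicate (t - 2) M + r) with hs'
      have hcard' : Multiset.card s' = m - 1 := by
        have : Multiset.card s = t + Multiset.card r := by
          rw [hsplit]; simp
        rw [hs']
        simp only [Multiset.card_cons, Multiset.card_add, Multiset.card_replicate]
        omega
      have hratsum : (s.map fun x => ((1 : ℚ) / 2) ^ x).sum
          = t * ((1 : ℚ) / 2) ^ M + (r.map fun x => ((1 : ℚ) / 2) ^ x).sum := by
        conv_lhs => rw [hsplit]
        simp [Multiset.map_replicate, Multiset.sum_replicate]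
      have hpowM : ((1 : ℚ) / 2) ^ (M - 1) = 2 * ((1 : ℚ) / 2) ^ M := by
        have hMeq : M = (M - 1) + 1 := by omega
        rw [hMeq, pow_succ]
        ring_nf
        congr 1
        omega
      have hsum' : (s'.map fun x => ((1 : ℚ) / 2) ^ x).sum = 1 := by
        rw [hs']
        simp only [Multiset.map_cons, Multiset.sum_cons, Multiset.map_add,
          Multiset.sum_add, Multiset.map_replicate, Multiset.sum_replicate]
        rw [hratsum] at hsum
        have hcast : ((t - 2 : ℕ) : ℚ) = (t : ℚ) - 2 := by
          push_cast [Nat.cast_sub ht2]; ring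
        rw [hpowM, nsmul_eq_mul, hcast]
        linarith
      have hlt : m - 1 < m := by omega
      have hMm : M - 1 < m - 1 := by
        apply ih (m - 1) hlt s' hcard' hsum'
        rw [hs']
        exact Multiset.mem_cons_self _ _
      have := hMax e he
      omega

lemma headI_eq_one {l : List ℕ} (h : l.head? = some 1) : l.headI = 1 := by
  cases l with
  | nil => simp at h
  | cons a t =>
    simp only [List.head?_cons, Option.some.injEq] at h
    simpa using h

/-- The bijection, at the level of subtypes. -/
noncomputable def F (k : ℕ) (hk : 1 ≤ k) :
    {l : List ℕ // IsCString k l} → {s : Multiset ℕ // IsPartitionOfOne (k + 1) s} :=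
  fun lp => ⟨g 1 lp.1, by
    obtain ⟨l, hlen, hhead, hchain, hsum⟩ := lp
    have hne : l ≠ [] := by
      intro h; subst h; simp at hlen; omega
    have hh1 : l.headI = 1 := headI_eq_one hhead
    constructor
    · rw [card_g 1 hne hchain, hsum, hh1]
    · rw [sum_g 1 hchain, hh1]
      norm_num⟩

lemma F_bijective (k : ℕ) (hk : 1 ≤ k) : Function.Bijective (F k hk) := by
  constructor
  · rintro ⟨l₁, h₁⟩ ⟨l₂, h₂⟩ hF
    have hg : g 1 l₁ = g 1 l₂ := congrArg Subtype.val hF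
    have := g_inj l₁ l₂ 1 h₁.2.2.1 h₂.2.2.1 (by rw [h₁.1, h₂.1])
      (by rw [headI_eq_one h₁.2.1, headI_eq_one h₂.2.1]) hg
    exact Subtype.ext this
  · rintro ⟨s, hcard, hsum⟩
    have hm2 : 2 ≤ k + 1 := by omega
    have hbd : ∀ x ∈ s, 1 ≤ x ∧ x < 1 + k := by
      intro x hx
      refine ⟨part_pos hm2 hcard hsum x hx, ?_⟩
      have := part_bound (k + 1) s hcard hsum x hx
      omega
    have hsum' : (s.map fun x => ((1 : ℚ) / 2) ^ x).sum = 2 * (1 : ℕ) * ((1 : ℚ) / 2) ^ 1 := by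
      rw [hsum]; norm_num
    obtain ⟨l, hlen, hhead, hchain, hg⟩ := g_surj k 1 1 s hbd hsum'
    have hne : l ≠ [] := by
      intro h; subst h; simp at hlen; omega
    have hsuml : l.sum = k := by
      have := card_g 1 hne hchain
      rw [hg, hcard, hhead] at this
      omega
    have hcs : IsCString k l := by
      refine ⟨hlen, ?_, hchain, hsuml⟩
      cases l with
      | nil => exact absurd rfl hne
      | cons a t =>
        have : a = 1 := hhead
        rw [this]
        rfl
    exact ⟨⟨l, hcs⟩, Subtype.ext hg⟩

end CSP

/-- For every `k ≥ 1`, the number `Π_k` of c-strings of length `k` equals the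
number of partitions of `1` into `k+1` powers of `1/2`. -/
theorem numCStrings_eq_numPartitionsOfOne (k : ℕ) (hk : 1 ≤ k) :
    numCStrings k = numPartitionsOfOne (k + 1) := by
  exact Nat.card_eq_of_bijective (CSP.F k hk) (CSP.F_bijective k hk)
end
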